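/- Let K be an n×(n+1) real matrix of full row rank n, let ξ > 0, λ > 0, and s ∈ (0,1]. Then [tr((K^T K ξ + λI)^{-1})]^s ≤ ξ^{-s}[tr((K^T K)^+)]^s + λ^{-s}, where (K^T K)^+ is the Moore–Penrose pseudoinverse of K^T K. -/

import Mathlib

open Matrix

lemma psd_trace_nonneg' {m : Type*} [Fintype m] [DecidableEq m] {M : Matrix m m ℝ}
    (hM : M.PosSemidef) : 0 ≤ M.trace := by
  rw [Matrix.trace]
  apply Finset.sum_nonneg
  intro i _
  have h := hM.dotProduct_mulVec_nonneg (Pi.single i 1)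
  simpa [dotProduct, Matrix.mulVec, Pi.single_apply, Finset.sum_ite_eq] using h

lemma psd_smul' {m : Type*} [Fintype m] {M : Matrix m m ℝ} (hM : M.PosSemidef) {c : ℝ}
    (hc : 0 ≤ c) : (c • M).PosSemidef := by
  refine Matrix.PosSemidef.of_dotProduct_mulVec_nonneg ?_ ?_
  · show (c • M)ᴴ = c • M
    rw [conjTranspose_smul, star_trivial, hM.1.eq]
  · intro x
    have := hM.dotProduct_mulVec_nonneg x
    simp only [Matrix.smul_mulVec, dotProduct_smul, smul_eq_mul]
    positivity

lemma rpow_subadd' {x y p : ℝ} (hx : 0 ≤ x) (hy : 0 ≤ y) (hp : 0 ≤ p) (hp1 : p ≤ 1) :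
    (x + y) ^ p ≤ x ^ p + y ^ p := by
  have h := NNReal.rpow_add_le_add_rpow x.toNNReal y.toNNReal hp hp1
  rw [← Real.toNNReal_add hx hy] at h
  have h2 := NNReal.coe_le_coe.mpr h
  rwa [NNReal.coe_rpow, NNReal.coe_add, NNReal.coe_rpow, NNReal.coe_rpow,
    Real.coe_toNNReal _ (by positivity), Real.coe_toNNReal _ hx, Real.coe_toNNReal _ hy] at h2

lemma isUnit_of_rank_eq_card' {n : ℕ} (G : Matrix (Fin n) (Fin n) ℝ) (h : G.rank = n) :
    IsUnit G := by
  rw [← Matrix.mulVec_surjective_iff_isUnit]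
  have : LinearMap.range G.mulVecLin = ⊤ := by
    apply Submodule.eq_top_of_finrank_eq
    rw [show Module.finrank ℝ (LinearMap.range G.mulVecLin) = G.rank from rfl, h]
    simp [Module.finrank_pi]
  intro v
  obtain ⟨w, hw⟩ := (LinearMap.range_eq_top.mp this) v
  exact ⟨w, hw⟩

theorem trace_inverse_rpow_bound (n : ℕ)
    (K : Matrix (Fin n) (Fin (n + 1)) ℝ) (hK : K.rank = n)
    (Mplus : Matrix (Fin (n + 1)) (Fin (n + 1)) ℝ)
    -- Mplus is the Moore–Penrose pseudoinverse of KᵀK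
    (h1 : (Kᵀ * K) * Mplus * (Kᵀ * K) = Kᵀ * K)
    (h2 : Mplus * (Kᵀ * K) * Mplus = Mplus)
    (h3 : ((Kᵀ * K) * Mplus)ᵀ = (Kᵀ * K) * Mplus)
    (h4 : (Mplus * (Kᵀ * K))ᵀ = Mplus * (Kᵀ * K))
    (ξ lam s : ℝ) (hξ : 0 < ξ) (hlam : 0 < lam) (hs : s ∈ Set.Ioc (0:ℝ) 1) :
    (Matrix.trace ((ξ • (Kᵀ * K) + lam • (1 : Matrix (Fin (n + 1)) (Fin (n + 1)) ℝ))⁻¹)) ^ s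
      ≤ ξ ^ (-s) * (Matrix.trace Mplus) ^ s + lam ^ (-s) := by
  obtain ⟨hs0, hs1⟩ := hs
  set M : Matrix (Fin (n+1)) (Fin (n+1)) ℝ := Kᵀ * K with hMdef
  set G : Matrix (Fin n) (Fin n) ℝ := K * Kᵀ with hGdef
  -- G is invertible
  have hGrank : G.rank = n := by rw [hGdef, Matrix.rank_self_mul_transpose, hK]
  have hGunit : IsUnit G := isUnit_of_rank_eq_card' G hGrank
  have hGdet : IsUnit G.det := (Matrix.isUnit_iff_isUnit_det G).mp hGunit
  set Gi : Matrix (Fin n) (Fin n) ℝ := G⁻¹ with hGidef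
  have hGGi : G * Gi = 1 := Matrix.mul_nonsing_inv G hGdet
  have hGiG : Gi * G = 1 := Matrix.nonsing_inv_mul G hGdet
  have hGT : Gᵀ = G := by rw [hGdef, Matrix.transpose_mul, Matrix.transpose_transpose]
  have hGiT : Giᵀ = Gi := by rw [hGidef, Matrix.transpose_nonsing_inv, hGT]
  set P : Matrix (Fin (n+1)) (Fin (n+1)) ℝ := Kᵀ * Gi * K with hPdef
  set E : Matrix (Fin (n+1)) (Fin (n+1)) ℝ := Kᵀ * Gi * Gi * K with hEdef
  -- basic algebraic identities
  have hKtKKt : Kᵀ * K * Kᵀ = Kᵀ * G := by rw [hGdef, Matrix.mul_assoc]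
  have hKKtK : K * (Kᵀ * K) = G * K := by rw [hGdef, Matrix.mul_assoc]
  have hMP : M * P = M := by
    rw [hMdef, hPdef, ← Matrix.mul_assoc, ← Matrix.mul_assoc, hKtKKt,
      Matrix.mul_assoc Kᵀ G Gi, hGGi, Matrix.mul_one]
  have hPM : P * M = M := by
    rw [hMdef, hPdef, Matrix.mul_assoc (Kᵀ * Gi) K (Kᵀ * K), hKKtK,
      ← Matrix.mul_assoc, Matrix.mul_assoc Kᵀ Gi G, hGiG, Matrix.mul_one]
  have hME : M * E = P := by
    rw [hMdef, hEdef, hPdef, ← Matrix.mul_assoc, ← Matrix.mul_assoc, ← Matrix.mul_assoc,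
      hKtKKt, Matrix.mul_assoc Kᵀ G Gi, hGGi, Matrix.mul_one]
  have hEM : E * M = P := by
    rw [hMdef, hEdef, hPdef, Matrix.mul_assoc (Kᵀ * Gi * Gi) K (Kᵀ * K), hKKtK,
      ← Matrix.mul_assoc, Matrix.mul_assoc (Kᵀ * Gi) Gi G, hGiG, Matrix.mul_one]
  have hEP : E * P = E := by
    rw [hEdef, hPdef, Matrix.mul_assoc (Kᵀ * Gi * Gi) K (Kᵀ * Gi * K),
      show K * (Kᵀ * Gi * K) = G * Gi * K by
        rw [hGdef, ← Matrix.mul_assoc, ← Matrix.mul_assoc],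
      hGGi, Matrix.one_mul]
  have hPT : Pᵀ = P := by
    rw [hPdef, Matrix.transpose_mul, Matrix.transpose_mul, hGiT, Matrix.transpose_transpose,
      Matrix.mul_assoc]
  have hMEM : M * E * M = M := by rw [hME, hPM]
  have hMET : (M * E)ᵀ = M * E := by rw [hME, hPT]
  have hEMT : (E * M)ᵀ = E * M := by rw [hEM, hPT]
  -- uniqueness of the pseudoinverse : Mplus = E
  have step1 : M * Mplus = M * E := by
    calc M * Mplus = (M * E * M) * Mplus := by rw [hMEM]
    _ = (M * E) * (M * Mplus) := by rw [Matrix.mul_assoc]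
    _ = (M * E)ᵀ * (M * Mplus)ᵀ := by rw [hMET, h3]
    _ = ((M * Mplus) * (M * E))ᵀ := by rw [Matrix.transpose_mul (M * Mplus) (M * E)]
    _ = ((M * Mplus * M) * E)ᵀ := by rw [Matrix.mul_assoc (M * Mplus) M E]
    _ = (M * E)ᵀ := by rw [h1]
    _ = M * E := hMET
  have step2 : Mplus * M = E * M := by
    calc Mplus * M = Mplus * (M * E * M) := by rw [hMEM]
    _ = (Mplus * M) * (E * M) := by
        rw [Matrix.mul_assoc M E M, ← Matrix.mul_assoc Mplus M (E * M)]
    _ = (Mplus * M)ᵀ * (E * M)ᵀ := by rw [hEMT, h4]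
    _ = ((E * M) * (Mplus * M))ᵀ := by rw [Matrix.transpose_mul (E * M) (Mplus * M)]
    _ = (E * (M * Mplus * M))ᵀ := by
        rw [Matrix.mul_assoc M Mplus M, ← Matrix.mul_assoc E M (Mplus * M)]
    _ = (E * M)ᵀ := by rw [h1]
    _ = E * M := hEMT
  have hMplusE : Mplus = E := by
    calc Mplus = Mplus * M * Mplus := h2.symm
    _ = (Mplus * M) * Mplus := rfl
    _ = (E * M) * Mplus := by rw [step2]
    _ = E * (M * Mplus) := by rw [Matrix.mul_assoc]
    _ = E * (M * E) := by rw [step1]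
    _ = E * P := by rw [hME]
    _ = E := hEP
  rw [hMplusE]
  clear h1 h2 h3 h4 step1 step2 hMplusE
  -- positivity facts
  have hMpsd : M.PosSemidef := by
    have := Matrix.posSemidef_conjTranspose_mul_self K
    rwa [conjTranspose_eq_transpose_of_trivial] at this
  set A : Matrix (Fin (n+1)) (Fin (n+1)) ℝ := ξ • M + lam • 1 with hAdef
  have hApd : A.PosDef := by
    apply Matrix.PosDef.posSemidef_add (psd_smul' hMpsd hξ.le)
    have h1pd : (1 : Matrix (Fin (n+1)) (Fin (n+1)) ℝ).PosDef := Matrix.PosDef.one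
    refine Matrix.PosDef.of_dotProduct_mulVec_pos ?_ ?_
    · show (lam • (1 : Matrix (Fin (n+1)) (Fin (n+1)) ℝ))ᴴ = _
      rw [conjTranspose_smul, star_trivial, h1pd.1.eq]
    · intro x hx
      have := h1pd.dotProduct_mulVec_pos hx
      simp only [Matrix.smul_mulVec, dotProduct_smul, smul_eq_mul]
      exact mul_pos hlam this
  have hAdet : IsUnit A.det := (Matrix.isUnit_iff_isUnit_det A).mp hApd.isUnit
  set B : Matrix (Fin (n+1)) (Fin (n+1)) ℝ := A⁻¹ with hBdef
  have hBA : B * A = 1 := Matrix.nonsing_inv_mul A hAdet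
  have hBpsd : B.PosSemidef := hApd.inv.posSemidef
  -- B * (1 - P) = lam⁻¹ • (1 - P)
  have hA1P : A * (1 - P) = lam • (1 - P) := by
    rw [hAdef, Matrix.add_mul, Matrix.smul_mul, Matrix.smul_mul, Matrix.mul_sub,
      Matrix.mul_one, hMP, sub_self, smul_zero, Matrix.one_mul, zero_add]
  have hB1P : B * (1 - P) = lam⁻¹ • (1 - P) := by
    have h := congrArg (fun X => B * X) hA1P
    simp only [← Matrix.mul_assoc, hBA, Matrix.one_mul, Matrix.mul_smul] at h
    calc B * (1 - P) = lam⁻¹ • (lam • (B * (1 - P))) := by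
          rw [smul_smul, inv_mul_cancel₀ hlam.ne', one_smul]
    _ = lam⁻¹ • (1 - P) := by rw [← h]
  -- ξ • (B * P) + lam • (B * E) = E
  have hAE : A * E = ξ • P + lam • E := by
    rw [hAdef, Matrix.add_mul, Matrix.smul_mul, Matrix.smul_mul, hME, Matrix.one_mul]
  have hBPE : ξ • (B * P) + lam • (B * E) = E := by
    have h := congrArg (fun X => B * X) hAE
    simp only [Matrix.mul_add, Matrix.mul_smul, ← Matrix.mul_assoc, hBA, Matrix.one_mul] at h
    exact h.symm
  -- traces
  have htP : P.trace = (n : ℝ) := by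
    rw [hPdef, Matrix.mul_assoc, Matrix.trace_mul_comm, Matrix.mul_assoc, ← hGdef, hGiG,
      Matrix.trace_one]
    simp
  set N : Matrix (Fin n) (Fin (n+1)) ℝ := Gi * K with hNdef
  have hEN : E = Nᵀ * N := by
    rw [hNdef, Matrix.transpose_mul, hGiT, hEdef, ← Matrix.mul_assoc]
  have htE : 0 ≤ E.trace := by
    rw [hEN]
    have := Matrix.posSemidef_conjTranspose_mul_self N
    rw [conjTranspose_eq_transpose_of_trivial] at this
    exact psd_trace_nonneg' this
  have htBE : 0 ≤ (B * E).trace := by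
    have hpsd : (N * B * Nᵀ).PosSemidef := by
      have := hBpsd.mul_mul_conjTranspose_same N
      rwa [conjTranspose_eq_transpose_of_trivial] at this
    have h := psd_trace_nonneg' hpsd
    rwa [Matrix.trace_mul_cycle N B Nᵀ, ← hEN, Matrix.trace_mul_comm] at h
  have htB : 0 ≤ B.trace := psd_trace_nonneg' hBpsd
  -- main trace bound
  have htBP : ξ * (B * P).trace + lam * (B * E).trace = E.trace := by
    have := congrArg Matrix.trace hBPE
    rwa [Matrix.trace_add, Matrix.trace_smul, Matrix.trace_smul, smul_eq_mul, smul_eq_mul]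
      at this
  have htB1P : (B * (1 - P)).trace = lam⁻¹ := by
    rw [hB1P, Matrix.trace_smul, smul_eq_mul, Matrix.trace_sub, Matrix.trace_one, htP]
    simp [Fintype.card_fin]
  have hsplit : B.trace = (B * P).trace + (B * (1 - P)).trace := by
    rw [← Matrix.trace_add, ← Matrix.mul_add]
    congr 1
    rw [add_sub_cancel, Matrix.mul_one]
  have hbound : B.trace ≤ ξ⁻¹ * E.trace + lam⁻¹ := by
    rw [hsplit, htB1P]
    have h1 : (B * P).trace = ξ⁻¹ * (E.trace - lam * (B * E).trace) := by
      field_simp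
      linarith [htBP]
    rw [h1]
    have : ξ⁻¹ * (E.trace - lam * (B * E).trace) ≤ ξ⁻¹ * E.trace := by
      apply mul_le_mul_of_nonneg_left _ (by positivity)
      nlinarith [mul_nonneg hlam.le htBE]
    linarith
  -- rpow finish
  have step : B.trace ^ s ≤ (ξ⁻¹ * E.trace + lam⁻¹) ^ s :=
    Real.rpow_le_rpow htB hbound hs0.le
  have step2 : (ξ⁻¹ * E.trace + lam⁻¹) ^ s ≤ (ξ⁻¹ * E.trace) ^ s + (lam⁻¹) ^ s :=
    rpow_subadd' (by positivity) (by positivity) hs0.le hs1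
  have hmul : (ξ⁻¹ * E.trace) ^ s = ξ ^ (-s) * E.trace ^ s := by
    rw [Real.mul_rpow (by positivity) htE, Real.rpow_neg hξ.le, ← Real.inv_rpow hξ.le]
  have hlm : (lam⁻¹ : ℝ) ^ s = lam ^ (-s) := by
    rw [Real.rpow_neg hlam.le, ← Real.inv_rpow hlam.le]
  calc B.trace ^ s ≤ (ξ⁻¹ * E.trace + lam⁻¹) ^ s := step
  _ ≤ (ξ⁻¹ * E.trace) ^ s + (lam⁻¹) ^ s := step2
  _ = ξ ^ (-s) * E.trace ^ s + lam ^ (-s) := by rw [hmul, hlm]
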